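/- Let L ∈ ℝ^{n×m} have full column rank and c_0 ∈ (0,∞)^n, and suppose y* = Lᵀ c* for some positive vector c*. Then the strictly convex function f(α) = Σ_i c_{0,i} exp((Lα)_i) − ⟨y*, α⟩ attains a minimizer α* satisfying Lᵀ(c_0 ∘ exp(Lα*)) = y*; consequently c(α*) = c_0 ∘ exp(Lα*) is a positive vector with the prescribed conserved totals y* and the same reaction quotients as c_0 (given Sᵀ L = 0). -/

import Mathlib

open Matrix Filter

lemma aux_bound (a b ε t : ℝ) (ha : 0 < a) (hb : 0 < b) (hε : 0 < ε) (hεb : ε ≤ b) :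
    ε * |t| - (b + ε)^2 / a ≤ a * Real.exp t - b * t := by
  have hB : ((b + ε)^2 / a) * a = (b + ε)^2 := by field_simp
  have hBpos : 0 ≤ (b + ε)^2 / a := by positivity
  rcases le_or_gt t 0 with ht | ht
  · rw [abs_of_nonpos ht]
    have h1 : 0 < Real.exp t := Real.exp_pos t
    nlinarith
  · rw [abs_of_pos ht]
    have h2 : t/2 + 1 ≤ Real.exp (t/2) := Real.add_one_le_exp _
    have h3 : Real.exp t = Real.exp (t/2) * Real.exp (t/2) := by
      rw [← Real.exp_add]; ring_nf
    have h4 : 0 < Real.exp (t/2) := Real.exp_pos _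
    have h5 : t/2 < Real.exp (t/2) := by linarith
    have h6 : (t/2)^2 ≤ Real.exp t := by nlinarith
    have h7 : a * (t/2)^2 ≤ a * Real.exp t := by nlinarith
    nlinarith [sq_nonneg (a * (t/2) - (b + ε)), mul_pos ha ha]

/-- If `L` has full column rank, `c₀ > 0`, and `y* = Lᵀ c*` for some positive `c*`,
then `f(α) = Σᵢ c₀ᵢ exp((Lα)ᵢ) − ⟨y*, α⟩` attains a minimizer `α*` with
`Lᵀ(c₀ ∘ exp(Lα*)) = y*`; the vector `c(α*) = c₀ ∘ exp(Lα*)` is positive,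
has conserved totals `y*`, and (given `Sᵀ L = 0`) the same reaction quotients
as `c₀`. -/
theorem stmt_17 (n r m : ℕ) (S : Matrix (Fin n) (Fin r) ℝ)
    (L : Matrix (Fin n) (Fin m) ℝ) (hSL : Sᵀ * L = 0)
    (hL : Function.Injective L.mulVec)
    (c₀ : Fin n → ℝ) (hc₀ : ∀ i, 0 < c₀ i)
    (ystar : Fin m → ℝ) (cstar : Fin n → ℝ) (hcstar : ∀ i, 0 < cstar i)
    (hy : Lᵀ.mulVec cstar = ystar) :
    ∃ αstar : Fin m → ℝ,
      IsMinOn (fun α : Fin m → ℝ => ∑ i, c₀ i * Real.exp (L.mulVec α i) - ∑ j, ystar j * α j)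
        Set.univ αstar ∧
      Lᵀ.mulVec (fun i => c₀ i * Real.exp (L.mulVec αstar i)) = ystar ∧
      (∀ i, 0 < c₀ i * Real.exp (L.mulVec αstar i)) ∧
      Sᵀ.mulVec (fun i => Real.log (c₀ i * Real.exp (L.mulVec αstar i))) =
        Sᵀ.mulVec (fun i => Real.log (c₀ i)) := by
  classical
  set f : (Fin m → ℝ) → ℝ :=
    fun α => ∑ i, c₀ i * Real.exp (L.mulVec α i) - ∑ j, ystar j * α j with hfdef
  -- the last conclusion is easy once we have any αstar
  have hlog : ∀ αstar : Fin m → ℝ,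
      Sᵀ.mulVec (fun i => Real.log (c₀ i * Real.exp (L.mulVec αstar i))) =
        Sᵀ.mulVec (fun i => Real.log (c₀ i)) := by
    intro αstar
    have h1 : (fun i => Real.log (c₀ i * Real.exp (L.mulVec αstar i)))
        = (fun i => Real.log (c₀ i)) + L.mulVec αstar := by
      funext i
      rw [Real.log_mul (hc₀ i).ne' (Real.exp_pos _).ne', Real.log_exp]
      rfl
    rw [h1, mulVec_add, mulVec_mulVec, hSL, zero_mulVec, add_zero]
  rcases isEmpty_or_nonempty (Fin n) with hn | hn
  · -- degenerate case: no species
    have hy0 : ystar = 0 := by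
      funext j
      rw [← hy]
      simp [Matrix.mulVec, dotProduct]
    refine ⟨0, ?_, ?_, fun i => hn.elim i, hlog 0⟩
    · rw [isMinOn_iff]
      intro α _
      simp [hfdef, hy0]
    · funext j
      simp [Matrix.mulVec, dotProduct, hy0]
  · -- main case
    set F : (Fin n → ℝ) → ℝ :=
      fun v => ∑ i, (c₀ i * Real.exp (v i) - cstar i * v i) with hFdef
    have hfF : ∀ α, f α = F (L.mulVec α) := by
      intro α
      have h1 : ∑ j, ystar j * α j = ∑ i, cstar i * L.mulVec α i :=
        calc ∑ j, ystar j * α j = (cstar ᵥ* L) ⬝ᵥ α := by rw [← hy, mulVec_transpose]; rfl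
          _ = cstar ⬝ᵥ L.mulVec α := (dotProduct_mulVec cstar L α).symm
          _ = ∑ i, cstar i * L.mulVec α i := rfl
      simp only [hfdef, hFdef, h1, Finset.sum_sub_distrib]
    -- coercivity of F
    obtain ⟨ε, hε, hεle⟩ : ∃ ε > 0, ∀ i, ε ≤ cstar i := by
      refine ⟨Finset.univ.inf' Finset.univ_nonempty cstar, ?_, fun i =>
        Finset.inf'_le _ (Finset.mem_univ i)⟩
      exact (Finset.lt_inf'_iff _).mpr fun i _ => hcstar i
    set B : ℝ := ∑ i, (cstar i + ε)^2 / (c₀ i) with hBdef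
    have hFlb : ∀ v : Fin n → ℝ, ε * ‖v‖ - B ≤ F v := by
      intro v
      have h2 : ∑ i, (ε * |v i| - (cstar i + ε)^2 / c₀ i) ≤ F v :=
        Finset.sum_le_sum fun i _ => aux_bound _ _ _ _ (hc₀ i) (hcstar i) hε (hεle i)
      have h3 : ‖v‖ ≤ ∑ i, |v i| := by
        rw [pi_norm_le_iff_of_nonneg (Finset.sum_nonneg fun i _ => abs_nonneg _)]
        intro i
        rw [Real.norm_eq_abs]
        exact Finset.single_le_sum (fun j _ => abs_nonneg (v j)) (Finset.mem_univ i)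
      calc ε * ‖v‖ - B ≤ ε * (∑ i, |v i|) - B := by
            nlinarith [mul_le_mul_of_nonneg_left h3 hε.le]
        _ = ∑ i, (ε * |v i| - (cstar i + ε)^2 / c₀ i) := by
            rw [Finset.sum_sub_distrib, ← Finset.mul_sum, hBdef]
        _ ≤ F v := h2
    have hFcont : Continuous F := by
      apply continuous_finset_sum
      intro i _
      exact (continuous_const.mul (Real.continuous_exp.comp (continuous_apply i))).sub
        (continuous_const.mul (continuous_apply i))
    have hFcoer : Tendsto F (cocompact (Fin n → ℝ)) atTop := by
      refine tendsto_atTop_mono hFlb ?_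
      simp only [sub_eq_add_neg]
      exact tendsto_atTop_add_const_right _ _ (tendsto_norm_cocompact_atTop.const_mul_atTop hε)
    -- minimize over the range of L
    set V : Submodule ℝ (Fin n → ℝ) := LinearMap.range L.mulVecLin with hVdef
    have hVclosed : IsClosed (V : Set (Fin n → ℝ)) := Submodule.closed_of_finiteDimensional V
    have hco : Tendsto ((↑) : V → (Fin n → ℝ)) (cocompact V) (cocompact (Fin n → ℝ)) :=
      hVclosed.isClosedEmbedding_subtypeVal.tendsto_cocompact
    haveI : Nonempty V := ⟨0⟩
    obtain ⟨w₀, hw₀⟩ := (hFcont.comp continuous_subtype_val).exists_forall_le (hFcoer.comp hco)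
    obtain ⟨αstar, hα⟩ := LinearMap.mem_range.mp w₀.2
    have hαv : L.mulVec αstar = (w₀ : Fin n → ℝ) := by rw [← hα]; rfl
    have hmin : IsMinOn f Set.univ αstar := by
      rw [isMinOn_iff]
      intro α _
      rw [hfF, hfF, hαv]
      exact hw₀ ⟨L.mulVec α, LinearMap.mem_range.mpr ⟨α, rfl⟩⟩
    -- first-order conditions
    have hgrad : ∀ j, ∑ i, L i j * (c₀ i * Real.exp (L.mulVec αstar i)) = ystar j := by
      intro j
      set φ : ℝ → ℝ := fun t =>
        ∑ i, c₀ i * Real.exp (L.mulVec αstar i + t * L i j)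
          - ((∑ k, ystar k * αstar k) + t * ystar j) with hφdef
      have hφf : ∀ t, φ t = f (αstar + t • (Pi.single j 1 : Fin m → ℝ)) := by
        intro t
        have hmv : L.mulVec (αstar + t • (Pi.single j 1 : Fin m → ℝ))
            = fun i => L.mulVec αstar i + t * L i j := by
          funext i
          rw [mulVec_add, mulVec_smul, mulVec_single]
          simp
        have hsum2 : ∑ k, ystar k * (αstar + t • (Pi.single j 1 : Fin m → ℝ)) k
            = (∑ k, ystar k * αstar k) + t * ystar j := by
          simp only [Pi.add_apply, Pi.smul_apply, smul_eq_mul, mul_add,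
            Finset.sum_add_distrib]
          congr 1
          simp [Pi.single_apply, mul_ite]
          ring
        simp only [hφdef, hfdef, hmv, hsum2]
      have hder : HasDerivAt φ
          ((∑ i, c₀ i * Real.exp (L.mulVec αstar i) * L i j) - ystar j) 0 := by
        have h1 : ∀ i ∈ Finset.univ, HasDerivAt
            (fun t : ℝ => c₀ i * Real.exp (L.mulVec αstar i + t * L i j))
            (c₀ i * (Real.exp (L.mulVec αstar i + 0 * L i j) * (1 * L i j))) 0 :=
          fun i _ =>
            ((((hasDerivAt_id 0).mul_const (L i j)).const_add (L.mulVec αstar i)).exp).const_mul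
              (c₀ i)
        have h3 : HasDerivAt (fun t : ℝ => (∑ k, ystar k * αstar k) + t * ystar j)
            (1 * ystar j) 0 :=
          ((hasDerivAt_id 0).mul_const (ystar j)).const_add _
        have h4 : HasDerivAt φ _ 0 := (HasDerivAt.fun_sum h1).sub h3
        convert h4 using 1
        simp [mul_assoc]
      have hlocmin : IsLocalMin φ 0 := by
        have h0 : φ 0 = f αstar := by rw [hφf]; simp
        have : IsMinOn φ Set.univ 0 := by
          rw [isMinOn_iff]
          intro t _
          rw [h0, hφf t]
          exact isMinOn_iff.mp hmin _ (Set.mem_univ _)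
        exact this.isLocalMin Filter.univ_mem
      have hz := hlocmin.hasDerivAt_eq_zero hder
      have hc : ∑ i, L i j * (c₀ i * Real.exp (L.mulVec αstar i))
          = ∑ i, c₀ i * Real.exp (L.mulVec αstar i) * L i j :=
        Finset.sum_congr rfl fun i _ => by ring
      rw [hc]
      linarith
    refine ⟨αstar, hmin, ?_, fun i => mul_pos (hc₀ i) (Real.exp_pos _), hlog αstar⟩
    funext j
    rw [← hgrad j]
    rfl
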